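/- In the setting of Motif (f) with Λ = (1 + η₂/δ₁)μ₁F̄₁ − Ē > 0, let α ∈ (0, ξ₁) be the unique critical point of f. If Ē − μ₁F̄₁ − μ₂F̄₂ ≥ 0 (with F̄₂ > 0), then there exists α₁ ≤ α with f(α₁) = F̄₂, and the set Γ = {Y₁ ∈ [0, ξ₁) : f(Y₁) < F̄₂} equals [0, α₁). If instead Ē − μ₁F̄₁ − μ₂F̄₂ < 0 and F̄₂ ≤ f(α), then Γ = [0, α₁) ∪ (α₂, ξ₁) for some α₁ ≤ α ≤ α₂ with f(α₁) = f(α₂) = F̄₂; and if F̄₂ > f(α), then Γ = [0, ξ₁). -/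
import Mathlib

open Set Filter Topology

/-- Motif (f), case `Λ > 0`: description of the admissible set
`Γ = {Y₁ ∈ [0, ξ₁) : f(Y₁) < F̄₂}` according to the position of `F̄₂`. -/
theorem motif_f_Gamma (η₂ δ₁ μ₁ μ₂ Ebar F₁ F₂ : ℝ)
    (hη₂ : 0 < η₂) (hδ₁ : 0 < δ₁) (hμ₁ : 0 < μ₁) (hμ₂ : 0 < μ₂)
    (hE : 0 < Ebar) (hF₁ : 0 < F₁) (hF₂ : 0 < F₂)
    (hΛ : 0 < (1 + η₂ / δ₁) * μ₁ * F₁ - Ebar)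
    (ξ₁ : ℝ) (hξ₁ : ξ₁ = min F₁ (Ebar / μ₁))
    (f : ℝ → ℝ)
    (hf : ∀ Y₁, f Y₁ =
      η₂ * (Ebar - μ₁ * Y₁) * Y₁ / (μ₂ * (δ₁ * (F₁ - Y₁) + η₂ * Y₁)))
    (α : ℝ) (hα : α ∈ Ioo 0 ξ₁)
    (hmono : StrictMonoOn f (Icc 0 α)) (hanti : StrictAntiOn f (Ico α ξ₁)) :
    let Γ : Set ℝ := {Y₁ | Y₁ ∈ Ico 0 ξ₁ ∧ f Y₁ < F₂}
    (0 ≤ Ebar - μ₁ * F₁ - μ₂ * F₂ →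
      ∃ α₁, α₁ ≤ α ∧ f α₁ = F₂ ∧ Γ = Ico 0 α₁) ∧
    (Ebar - μ₁ * F₁ - μ₂ * F₂ < 0 → F₂ ≤ f α →
      ∃ α₁ α₂, α₁ ≤ α ∧ α ≤ α₂ ∧ f α₁ = F₂ ∧ f α₂ = F₂ ∧
        Γ = Ico 0 α₁ ∪ Ioo α₂ ξ₁) ∧
    (f α < F₂ → Γ = Ico 0 ξ₁) := by
  intro Γ
  obtain ⟨hα0, hαξ⟩ := hα
  have hξ₁pos : 0 < ξ₁ := hα0.trans hαξ
  have hξ₁F₁ : ξ₁ ≤ F₁ := hξ₁ ▸ min_le_left _ _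
  have hf0 : f 0 = 0 := by simp [hf]
  have hfF₁ : f F₁ = (Ebar - μ₁ * F₁) / μ₂ := by
    rw [hf]; field_simp; ring
  have hden : ∀ y ∈ Icc (0:ℝ) F₁, μ₂ * (δ₁ * (F₁ - y) + η₂ * y) ≠ 0 := by
    intro y hy
    have h1 : 0 < δ₁ * (F₁ - y) + η₂ * y := by
      rcases eq_or_lt_of_le hy.1 with h | h
      · rw [← h]; simpa using mul_pos hδ₁ hF₁
      · exact add_pos_of_nonneg_of_pos (mul_nonneg hδ₁.le (sub_nonneg.2 hy.2)) (mul_pos hη₂ h)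
    exact ne_of_gt (mul_pos hμ₂ h1)
  have hcont : ContinuousOn f (Icc 0 F₁) := by
    have hfg : f = fun y => η₂ * (Ebar - μ₁ * y) * y / (μ₂ * (δ₁ * (F₁ - y) + η₂ * y)) :=
      funext hf
    rw [hfg]
    exact ContinuousOn.div (by fun_prop) (by fun_prop) hden
  have hcontξ : ContinuousOn f (Icc 0 ξ₁) := hcont.mono (Icc_subset_Icc_right hξ₁F₁)
  have hmono' := hmono.monotoneOn
  have hanti' := hanti.antitoneOn
  -- key: values on [α, ξ₁) dominate the boundary value f ξ₁
  have hkey : ∀ y ∈ Ico α ξ₁, f ξ₁ ≤ f y := by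
    intro y hy
    have hyξ : y < ξ₁ := hy.2
    have hne : (𝓝[Ioo y ξ₁] ξ₁).NeBot := right_nhdsWithin_Ioo_neBot hyξ
    have hsub : Ioo y ξ₁ ⊆ Icc 0 ξ₁ := fun z hz =>
      ⟨((hα0.trans_le hy.1).trans hz.1).le, hz.2.le⟩
    have htd : Tendsto f (𝓝[Ioo y ξ₁] ξ₁) (𝓝 (f ξ₁)) :=
      (hcontξ ξ₁ ⟨hξ₁pos.le, le_refl _⟩).mono_left (nhdsWithin_mono _ hsub)
    refine le_of_tendsto htd ?_
    refine eventually_nhdsWithin_of_forall (fun z hz => ?_)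
    exact (hanti hy ⟨hy.1.trans hz.1.le, hz.2⟩ hz.1).le
  refine ⟨?_, ?_, ?_⟩
  · -- Part 1
    intro h
    have hξF : ξ₁ = F₁ := by
      rw [hξ₁, min_eq_left]
      rw [le_div_iff₀ hμ₁]
      nlinarith [mul_pos hμ₂ hF₂]
    have hF₂ξ : F₂ ≤ f ξ₁ := by
      rw [hξF, hfF₁, le_div_iff₀ hμ₂]; nlinarith
    have hF₂α : F₂ ≤ f α := hF₂ξ.trans (hkey α ⟨le_refl α, hαξ⟩)
    obtain ⟨α₁, hα₁mem, hfα₁⟩ :=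
      intermediate_value_Icc hα0.le (hcontξ.mono (Icc_subset_Icc_right hαξ.le))
        ⟨by rw [hf0]; exact hF₂.le, hF₂α⟩
    refine ⟨α₁, hα₁mem.2, hfα₁, ?_⟩
    ext y
    constructor
    · rintro ⟨⟨hy0, hyξ⟩, hyF⟩
      refine ⟨hy0, ?_⟩
      by_contra hc
      push_neg at hc
      rcases le_or_gt y α with h' | h'
      · exact absurd (hfα₁ ▸ hmono' hα₁mem ⟨hy0, h'⟩ hc) (not_le.2 hyF)
      · exact absurd (hF₂ξ.trans (hkey y ⟨h'.le, hyξ⟩)) (not_le.2 hyF)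
    · rintro ⟨hy0, hy1⟩
      refine ⟨⟨hy0, lt_of_lt_of_le hy1 (hα₁mem.2.trans hαξ.le)⟩, ?_⟩
      calc f y < f α₁ := hmono ⟨hy0, hy1.le.trans hα₁mem.2⟩ hα₁mem hy1
        _ = F₂ := hfα₁
  · -- Part 2
    intro h hF₂α
    have hfξ : f ξ₁ < F₂ := by
      rcases min_cases F₁ (Ebar / μ₁) with ⟨hm, _⟩ | ⟨hm, _⟩
      · have hξF : ξ₁ = F₁ := hξ₁.trans hm
        rw [hξF, hfF₁, div_lt_iff₀ hμ₂]; nlinarith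
      · have hξE : ξ₁ = Ebar / μ₁ := hξ₁.trans hm
        have : f ξ₁ = 0 := by
          rw [hξE, hf, mul_div_cancel₀ _ (ne_of_gt hμ₁)]
          simp
        linarith
    obtain ⟨α₁, hα₁mem, hfα₁⟩ :=
      intermediate_value_Icc hα0.le (hcontξ.mono (Icc_subset_Icc_right hαξ.le))
        ⟨by rw [hf0]; exact hF₂.le, hF₂α⟩
    obtain ⟨α₂, hα₂mem, hfα₂⟩ :=
      intermediate_value_Icc' hαξ.le (hcontξ.mono (Icc_subset_Icc_left hα0.le))
        ⟨hfξ.le, hF₂α⟩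
    have hα₂ξ : α₂ < ξ₁ :=
      lt_of_le_of_ne hα₂mem.2 (fun hc => by rw [hc] at hfα₂; linarith)
    refine ⟨α₁, α₂, hα₁mem.2, hα₂mem.1, hfα₁, hfα₂, ?_⟩
    ext y
    constructor
    · rintro ⟨⟨hy0, hyξ⟩, hyF⟩
      rcases lt_or_ge y α₁ with h1 | h1
      · exact Or.inl ⟨hy0, h1⟩
      · refine Or.inr ⟨?_, hyξ⟩
        by_contra hc
        push_neg at hc
        rcases le_or_gt y α with h' | h'
        · exact absurd (hfα₁ ▸ hmono' hα₁mem ⟨hy0, h'⟩ h1) (not_le.2 hyF)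
        · exact absurd (hfα₂ ▸ hanti' ⟨h'.le, hyξ⟩ ⟨hα₂mem.1, hα₂ξ⟩ hc) (not_le.2 hyF)
    · rintro (⟨hy0, hy1⟩ | ⟨hy2, hyξ⟩)
      · refine ⟨⟨hy0, lt_of_lt_of_le hy1 (hα₁mem.2.trans hαξ.le)⟩, ?_⟩
        calc f y < f α₁ := hmono ⟨hy0, hy1.le.trans hα₁mem.2⟩ hα₁mem hy1
          _ = F₂ := hfα₁
      · have hy0 : (0:ℝ) ≤ y := (hα0.trans_le (hα₂mem.1.trans hy2.le)).le
        refine ⟨⟨hy0, hyξ⟩, ?_⟩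
        calc f y < f α₂ := hanti ⟨hα₂mem.1, hα₂ξ⟩ ⟨hα₂mem.1.trans hy2.le, hyξ⟩ hy2
          _ = F₂ := hfα₂
  · -- Part 3
    intro hfα
    ext y
    constructor
    · rintro ⟨hy, _⟩; exact hy
    · rintro ⟨hy0, hyξ⟩
      refine ⟨⟨hy0, hyξ⟩, ?_⟩
      rcases le_or_gt y α with h' | h'
      · exact lt_of_le_of_lt (hmono' ⟨hy0, h'⟩ ⟨hα0.le, le_refl α⟩ h') hfα
      · exact lt_trans (hanti ⟨le_refl α, hαξ⟩ ⟨h'.le, hyξ⟩ h') hfα
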